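/- Let k be a field, 𝔤 a Lie algebra over k, 𝔥 an abelian Lie subalgebra of 𝔤, and α : 𝔥 → k a linear functional. Let e, f ∈ 𝔤 satisfy [h, e] = α(h)·e and [h, f] = −α(h)·f for all h ∈ 𝔥. Let M be a 𝔤-module that is the direct sum of its 𝔥-weight spaces, each of which is finite-dimensional over k. If e and f both act injectively on M, then e and f act bijectively on M. -/
import Mathlib


variable (k : Type*) [Field k] (g : Type*) [LieRing g] [LieAlgebra k g]
  (H : LieSubalgebra k g)
  (M : Type*) [AddCommGroup M] [Module k M] [LieRingModule g M] [LieModule k g M]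

/-- The `μ`-weight space of `M` with respect to the subalgebra `H`. -/
def wtSpace (μ : ↥H →ₗ[k] k) : Submodule k M where
  carrier := {v | ∀ h : H, ⁅(h : g), v⁆ = μ h • v}
  add_mem' := by
    intro a b ha hb h
    rw [lie_add, ha h, hb h, smul_add]
  zero_mem' := by
    intro h
    rw [lie_zero, smul_zero]
  smul_mem' := by
    intro c v hv h
    rw [lie_smul, hv h, smul_comm]

lemma wt_mapsTo (β μ : ↥H →ₗ[k] k) (x : g)
    (hx : ∀ h : H, ⁅(h : g), x⁆ = β h • x) :
    ∀ v ∈ wtSpace k g H M μ, ⁅x, v⁆ ∈ wtSpace k g H M (μ + β) := by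
  intro v hv h
  have : ⁅(h : g), ⁅x, v⁆⁆ = ⁅⁅(h : g), x⁆, v⁆ + ⁅x, ⁅(h : g), v⁆⁆ := leibniz_lie _ _ _
  rw [this, hx h, hv h, smul_lie, lie_smul]
  simp [add_smul]
  abel

lemma aux_surj [DecidableEq (↥H →ₗ[k] k)] (β : ↥H →ₗ[k] k) (x y : g)
    (hx : ∀ h : H, ⁅(h : g), x⁆ = β h • x)
    (hy : ∀ h : H, ⁅(h : g), y⁆ = -(β h) • y)
    (hM : DirectSum.IsInternal fun μ : ↥H →ₗ[k] k => wtSpace k g H M μ)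
    (hfd : ∀ μ : ↥H →ₗ[k] k, FiniteDimensional k (wtSpace k g H M μ))
    (hxi : Function.Injective fun m : M => ⁅x, m⁆)
    (hyi : Function.Injective fun m : M => ⁅y, m⁆) :
    Function.Surjective (fun m : M => ⁅x, m⁆) := by
  haveI := hfd
  set X : Module.End k M := LieModule.toEnd k g M x with hX
  set Y : Module.End k M := LieModule.toEnd k g M y with hY
  have hXapp : ∀ m : M, X m = ⁅x, m⁆ := fun m => rfl
  have hYapp : ∀ m : M, Y m = ⁅y, m⁆ := fun m => rfl
  -- restricted maps
  have hmapX : ∀ μ, ∀ v ∈ wtSpace k g H M μ, X v ∈ wtSpace k g H M (μ + β) := by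
    intro μ v hv; exact wt_mapsTo k g H M β μ x hx v hv
  have hmapY : ∀ μ, ∀ v ∈ wtSpace k g H M μ, Y v ∈ wtSpace k g H M (μ + -β) := by
    intro μ v hv
    refine wt_mapsTo k g H M (-β) μ y ?_ v hv
    simpa using hy
  have hleX : ∀ μ, Module.finrank k (wtSpace k g H M μ)
      ≤ Module.finrank k (wtSpace k g H M (μ + β)) := by
    intro μ
    refine LinearMap.finrank_le_finrank_of_injective (f := X.restrict (hmapX μ)) ?_
    intro a b hab
    have : X (a : M) = X (b : M) := congrArg Subtype.val hab
    exact Subtype.ext (hxi this)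
  have hleY : ∀ μ, Module.finrank k (wtSpace k g H M μ)
      ≤ Module.finrank k (wtSpace k g H M (μ + -β)) := by
    intro μ
    refine LinearMap.finrank_le_finrank_of_injective (f := Y.restrict (hmapY μ)) ?_
    intro a b hab
    have : Y (a : M) = Y (b : M) := congrArg Subtype.val hab
    exact Subtype.ext (hyi this)
  have heq : ∀ μ, Module.finrank k (wtSpace k g H M μ)
      = Module.finrank k (wtSpace k g H M (μ + β)) := by
    intro μ
    refine le_antisymm (hleX μ) ?_
    have := hleY (μ + β)
    rwa [show μ + β + -β = μ from add_neg_cancel_right μ β] at this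
  -- surjectivity of restricted map
  have hsurj : ∀ μ, Function.Surjective (X.restrict (hmapX μ)) := by
    intro μ
    refine (LinearMap.injective_iff_surjective_of_finrank_eq_finrank (heq μ)).mp ?_
    intro a b hab
    have : X (a : M) = X (b : M) := congrArg Subtype.val hab
    exact Subtype.ext (hxi this)
  -- range of X is everything
  have hrange : LinearMap.range X = ⊤ := by
    rw [← top_le_iff, ← hM.submodule_iSup_eq_top, iSup_le_iff]
    intro ν v hv
    obtain ⟨⟨w, hw⟩, hww⟩ := hsurj (ν - β) ⟨v, by simpa only [sub_add_cancel] using hv⟩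
    exact ⟨w, congrArg Subtype.val hww⟩
  intro m
  obtain ⟨w, hw⟩ := (LinearMap.range_eq_top.mp hrange) m
  exact ⟨w, hw⟩

/-- Let `k` be a field, `g` a Lie algebra over `k`, `H` an abelian Lie
subalgebra of `g`, and `α : H → k` linear.  Let `e, f ∈ g` satisfy `⁅h, e⁆ = α(h) • e` and
`⁅h, f⁆ = -α(h) • f` for all `h ∈ H`.  Let `M` be a `g`-module that is the direct sum of its
`H`-weight spaces, each finite-dimensional over `k`.  If both `e` and `f` act injectively on
`M`, then they act bijectively on `M`. -/
theorem stmt_13 [IsLieAbelian ↥H] [DecidableEq (↥H →ₗ[k] k)]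
    (α : ↥H →ₗ[k] k) (e f : g)
    (he : ∀ h : H, ⁅(h : g), e⁆ = α h • e)
    (hf : ∀ h : H, ⁅(h : g), f⁆ = -(α h) • f)
    (hM : DirectSum.IsInternal fun μ : ↥H →ₗ[k] k => wtSpace k g H M μ)
    (hfd : ∀ μ : ↥H →ₗ[k] k, FiniteDimensional k (wtSpace k g H M μ))
    (hei : Function.Injective fun m : M => ⁅e, m⁆)
    (hfi : Function.Injective fun m : M => ⁅f, m⁆) :
    Function.Bijective (fun m : M => ⁅e, m⁆) ∧
    Function.Bijective (fun m : M => ⁅f, m⁆) := by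
  refine ⟨⟨hei, ?_⟩, ⟨hfi, ?_⟩⟩
  · exact aux_surj k g H M α e f he hf hM hfd hei hfi
  · refine aux_surj k g H M (-α) f e hf ?_ hM hfd hfi hei
    intro h
    simpa using he h
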